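/- Let G be a finite nilpotent group and A a finite G-module with A^G = 0. Then for all G-submodules V ≤ U of A, the quotient module U/V satisfies (U/V)^G = 0. -/

import Mathlib

open Finset in
lemma aux_avg {G A : Type*} [Group G] [Finite G] [AddCommGroup A]
    [DistribMulAction G A] (V : AddSubgroup A) (p k : ℕ) (hp : p.Prime)
    (Q : Subgroup G) (hQ : ¬ p ∣ Nat.card Q)
    (hQM : ∀ a : A, (p ^ k : ℤ) • a = 0 → (∀ q ∈ Q, q • a = a) → a = 0)
    (u : A) (hu : (p ^ k : ℤ) • u = 0) (hd : ∀ g : G, g • u - u ∈ V) : u ∈ V := by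
  classical
  haveI : Fintype Q := Fintype.ofFinite _
  set n : ℕ := Nat.card Q with hn
  have hdtor : ∀ g : G, (p ^ k : ℤ) • (g • u - u) = 0 := by
    intro g
    have h : ((p:ℤ)^k) • (g • u) = g • (((p:ℤ)^k) • u) :=
      ((DistribMulAction.toAddMonoidHom A g).map_zsmul ((p:ℤ)^k) u).symm
    rw [smul_sub, hu, h, hu, smul_zero, sub_zero]
  set s : A := ∑ q : Q, ((q : G) • u - u) with hs
  have hsV : s ∈ V := AddSubgroup.sum_mem _ fun q _ => hd q
  have hstor : (p ^ k : ℤ) • s = 0 := by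
    rw [hs, smul_sum]; exact Finset.sum_eq_zero fun q _ => hdtor q
  have key : ∀ q₀ : Q, (q₀ : G) • s - s = -((n : ℤ) • ((q₀ : G) • u - u)) := by
    intro q₀
    have h1 : (q₀ : G) • s = (∑ q : Q, ((q₀ * q : Q) : G) • u) - n • ((q₀ : G) • u) := by
      have e1 : ∀ q : Q, (q₀ : G) • ((q : G) • u - u) = ((q₀ * q : Q) : G) • u - (q₀ : G) • u :=
        fun q => by rw [smul_sub, ← mul_smul]; rfl
      rw [hs, Finset.smul_sum, Finset.sum_congr rfl fun q _ => e1 q, Finset.sum_sub_distrib,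
        Finset.sum_const, card_univ, ← Nat.card_eq_fintype_card]
    have h2 : (∑ q : Q, ((q₀ * q : Q) : G) • u) = ∑ q : Q, (q : G) • u := by
      exact Fintype.sum_equiv (Equiv.mulLeft q₀) _ _ fun q => rfl
    have h3 : s = (∑ q : Q, (q : G) • u) - n • u := by
      rw [hs, Finset.sum_sub_distrib, Finset.sum_const, card_univ, ← Nat.card_eq_fintype_card]
    rw [h1, h2, h3, smul_sub, natCast_zsmul, natCast_zsmul]
    abel
  -- Bezout
  have hcop : Nat.Coprime n (p ^ k) := ((hp.coprime_iff_not_dvd.mpr hQ).symm).pow_right k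
  have hbez : ∃ t c : ℤ, (n : ℤ) * t = 1 + c * (p : ℤ) ^ k := by
    have h1 : ((n : ℤ).gcd ((p : ℤ) ^ k) : ℤ) = 1 := by
      have : (n : ℤ).gcd ((p : ℤ) ^ k) = Nat.gcd n (p ^ k) := by
        rw [← Nat.cast_pow]
        exact Int.gcd_natCast_natCast n (p ^ k)
      rw [this, hcop]
      norm_num
    refine ⟨Int.gcdA (n : ℤ) ((p : ℤ) ^ k), -Int.gcdB (n : ℤ) ((p : ℤ) ^ k), ?_⟩
    have h2 := Int.gcd_eq_gcd_ab (n : ℤ) ((p : ℤ) ^ k)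
    rw [h1] at h2
    linarith
  obtain ⟨t, c, htc⟩ := hbez
  set w : A := t • s with hw
  have hwV : w ∈ V := AddSubgroup.zsmul_mem _ hsV t
  have hwfix : ∀ q ∈ Q, q • w - w = -(q • u - u) := by
    intro q hq
    have h0 : q • w = t • (q • s) :=
      (DistribMulAction.toAddMonoidHom A q).map_zsmul t s
    rw [hw, h0, ← smul_sub, key ⟨q, hq⟩, smul_neg, smul_smul]
    show -((t * (n:ℤ)) • (q • u - u)) = _
    rw [mul_comm, htc, add_smul, one_smul, mul_smul, hdtor, smul_zero, add_zero]
  set u' : A := u + w with hu'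
  have hu'Q : ∀ q ∈ Q, q • u' = u' := by
    intro q hq
    have : q • u' - u' = 0 := by
      have : q • u' = q • u + q • w := by rw [hu', smul_add]
      rw [this, hu']
      have h2 := hwfix q hq
      have : q • u + q • w - (u + w) = (q • u - u) + (q • w - w) := by abel
      rw [this, h2]
      abel
    exact sub_eq_zero.mp this
  have hu'tor : ((p:ℤ) ^ k) • u' = 0 := by
    have h0 : ((p:ℤ)^k) • w = t • (((p:ℤ)^k) • s) := smul_comm _ _ _
    rw [hu', smul_add, hu, h0, hstor, smul_zero, add_zero]
  have hu0 : u' = 0 := hQM u' hu'tor hu'Q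
  have h4 : u + w = 0 := hu' ▸ hu0
  rw [eq_neg_of_add_eq_zero_left h4]
  exact AddSubgroup.neg_mem _ hwV

lemma aux_M {G A : Type*} [Group G] [Finite G] [AddCommGroup A] [Finite A]
    [DistribMulAction G A]
    (hAG : ∀ a : A, (∀ g : G, g • a = a) → a = 0)
    (p k : ℕ) (hp : p.Prime) (P₀ : Subgroup G) (hP₀ : IsPGroup p P₀)
    (Q : Subgroup G) (hQn : Q.Normal)
    (hdec : ∀ g : G, ∃ x y : G, x ∈ P₀ ∧ y ∈ Q ∧ g = x * y) :
    ∀ a : A, ((p : ℤ) ^ k) • a = 0 → (∀ q ∈ Q, q • a = a) → a = 0 := by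
  classical
  haveI : Fact p.Prime := ⟨hp⟩
  set M : AddSubgroup A :=
    { carrier := {a : A | ((p : ℤ) ^ k) • a = 0 ∧ ∀ q ∈ Q, q • a = a}
      zero_mem' := ⟨smul_zero _, fun q _ => smul_zero _⟩
      add_mem' := fun h h' => ⟨by rw [smul_add, h.1, h'.1, add_zero],
        fun q hq => by rw [smul_add, h.2 q hq, h'.2 q hq]⟩
      neg_mem' := fun h => ⟨by rw [smul_neg, h.1, neg_zero],
        fun q hq => by rw [smul_neg, h.2 q hq]⟩ } with hM
  have hMg : ∀ g : G, ∀ a ∈ M, g • a ∈ M := by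
    rintro g a ⟨h1, h2⟩
    refine ⟨?_, ?_⟩
    · have h : ((p:ℤ)^k) • (g • a) = g • (((p:ℤ)^k) • a) :=
        ((DistribMulAction.toAddMonoidHom A g).map_zsmul ((p:ℤ)^k) a).symm
      rw [h, h1, smul_zero]
    · intro q hq
      have hconj : g⁻¹ * q * g ∈ Q := by
        have := hQn.conj_mem q hq g⁻¹
        rwa [inv_inv] at this
      calc q • g • a = (q * g) • a := (mul_smul _ _ _).symm
        _ = (g * (g⁻¹ * q * g)) • a := by group
        _ = g • ((g⁻¹ * q * g) • a) := mul_smul _ _ _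
        _ = g • a := by rw [h2 _ hconj]
  letI : MulAction P₀ M :=
    { smul := fun x a => ⟨(x : G) • (a : A), hMg x a a.2⟩
      one_smul := fun a => Subtype.ext (one_smul G (a : A))
      mul_smul := fun x y a => Subtype.ext (mul_smul (x : G) (y : G) (a : A)) }
  have hsmul_val : ∀ (x : P₀) (b : M), ((x • b : M) : A) = (x : G) • (b : A) := fun _ _ => rfl
  have hfixval : ∀ b : M, b ∈ MulAction.fixedPoints P₀ M → (b : A) = 0 := by
    intro b hb
    refine hAG _ fun g => ?_
    obtain ⟨x, y, hx, hy, rfl⟩ := hdec g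
    have hxb : (x : G) • (b : A) = (b : A) := by
      have := hb ⟨x, hx⟩
      have := congrArg Subtype.val this
      rwa [hsmul_val] at this
    rw [mul_smul, b.2.2 y hy, hxb]
  have hcard1 : Nat.card (MulAction.fixedPoints P₀ M) = 1 := by
    rw [Nat.card_eq_one_iff_unique]
    constructor
    · constructor
      rintro ⟨b1, h1⟩ ⟨b2, h2⟩
      have e1 : (b1 : A) = 0 := hfixval b1 h1
      have e2 : (b2 : A) = 0 := hfixval b2 h2
      ext
      rw [e1, e2]
    · refine ⟨⟨0, ?_⟩⟩
      intro x
      refine Subtype.ext ?_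
      rw [hsmul_val]
      exact smul_zero _
  have hmod := hP₀.card_modEq_card_fixedPoints M
  rw [hcard1] at hmod
  intro a ha1 ha2
  by_contra hane
  have haM : a ∈ M := ⟨ha1, ha2⟩
  haveI : Nontrivial M := ⟨⟨⟨a, haM⟩, 0, by simp [Subtype.ext_iff, hane]⟩⟩
  have h2lt : 1 < Nat.card M := Finite.one_lt_card_iff_nontrivial.mpr inferInstance
  set q : ℕ := (Nat.card M).minFac with hqdef
  have hq : q.Prime := Nat.minFac_prime (by omega)
  haveI : Fact q.Prime := ⟨hq⟩
  obtain ⟨x, hx⟩ := exists_prime_addOrderOf_dvd_card' (G := M) q (Nat.minFac_dvd _)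
  have hxt : (p ^ k : ℕ) • x = 0 := by
    refine Subtype.ext ?_
    have : ((p ^ k : ℕ) • x : M) = (((p:ℤ) ^ k) • x : M) := by
      rw [← natCast_zsmul]; push_cast; ring_nf
    rw [this]
    show ((p:ℤ)^k) • (x : A) = 0
    exact x.2.1
  have hdvd : q ∣ p ^ k := by
    rw [← hx]
    exact addOrderOf_dvd_of_nsmul_eq_zero hxt
  have hqp : q = p := (Nat.prime_dvd_prime_iff_eq hq hp).mp (hq.dvd_of_dvd_pow hdvd)
  have hpM : p ∣ Nat.card M := hqp ▸ Nat.minFac_dvd _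
  have h1 : Nat.card M % p = 1 % p := hmod
  have h1' : 1 % p = 1 := Nat.mod_eq_of_lt hp.one_lt
  obtain ⟨m, hm⟩ := hpM
  rw [hm] at h1
  rw [Nat.mul_mod_right] at h1
  omega

lemma aux_struct {G : Type*} [Group G] [Finite G] (hnil : Group.IsNilpotent G)
    (p : ℕ) (hp : p.Prime) (hpG : p ∣ Nat.card G) :
    ∃ P₀ Q : Subgroup G, IsPGroup p P₀ ∧ Q.Normal ∧ ¬ p ∣ Nat.card Q ∧
      ∀ g : G, ∃ x y : G, x ∈ P₀ ∧ y ∈ Q ∧ g = x * y := by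
  classical
  haveI : Fact p.Prime := ⟨hp⟩
  haveI : Finite (Subgroup G) := by infer_instance
  haveI hfinSyl : ∀ q : ℕ, Finite (Sylow q G) :=
    fun q => Finite.of_injective (fun P : Sylow q G => (P : Subgroup G)) fun _ _ h => Sylow.ext h
  haveI : Fintype G := Fintype.ofFinite G
  have hc0 : Nat.card G ≠ 0 := Nat.card_pos.ne'
  have hppmem : p ∈ (Nat.card G).primeFactors := Nat.mem_primeFactors.mpr ⟨hp, hpG, hc0⟩
  let pp : (Nat.card G).primeFactors := ⟨p, hppmem⟩
  obtain ⟨e⟩ := ((isNilpotent_of_finite_tfae (G := G)).out 0 4).mp hnil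
  have hnorm := ((isNilpotent_of_finite_tfae (G := G)).out 0 3).mp hnil
  obtain ⟨P₀⟩ := (Sylow.nonempty : Nonempty (Sylow p G))
  have hP₀n : (P₀ : Subgroup G).Normal := hnorm p ⟨hp⟩ P₀
  haveI : Finite (Sylow p G) := hfinSyl p
  haveI hU : Unique (Sylow p G) := Sylow.unique_of_normal P₀ hP₀n
  set ev := Pi.evalMonoidHom
    (fun q : (Nat.card G).primeFactors => ∀ P : Sylow (q : ℕ) G, ↥(P : Subgroup G)) pp with hev
  set Q : Subgroup G := (MonoidHom.ker ev).map e.toMonoidHom with hQdef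
  have hQn : Q.Normal := Subgroup.Normal.map (MonoidHom.normal_ker ev) e.toMonoidHom e.surjective
  -- cardinality of Q is coprime to p
  have hQcard : ¬ p ∣ Nat.card Q := by
    intro hdvd
    obtain ⟨z, hz⟩ := exists_prime_orderOf_dvd_card' (G := Q) p hdvd
    have hzG : orderOf (z : G) = p :=
      (orderOf_injective Q.subtype Q.subtype_injective z).trans hz
    obtain ⟨f, hf, hfz⟩ := Subgroup.mem_map.mp z.2
    have hfpp : f pp = 1 := hf
    haveI : ∀ q : (Nat.card G).primeFactors, Fintype (Sylow (q : ℕ) G) :=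
      fun q => Fintype.ofFinite _
    set m : ℕ := ∏ q : (Nat.card G).primeFactors, ∏ P : Sylow (q : ℕ) G,
      orderOf (f q P) with hm
    have hcop : Nat.Coprime p m := by
      refine Nat.Coprime.prod_right fun q _ => Nat.Coprime.prod_right fun P _ => ?_
      by_cases hq : q = pp
      · subst hq
        rw [hfpp]
        simp
      · have hqp : (q : ℕ) ≠ p := by
          intro h
          exact hq (Subtype.ext h)
        have hqprime : (q : ℕ).Prime := Nat.prime_of_mem_primeFactors q.2
        obtain ⟨j, hj⟩ := P.isPGroup' (f q P)
        have hdvd2 : orderOf (f q P) ∣ (q : ℕ) ^ j := orderOf_dvd_of_pow_eq_one hj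
        exact Nat.Coprime.coprime_dvd_right hdvd2
          (((Nat.coprime_primes hp hqprime).mpr (Ne.symm hqp)).pow_right j)
    have hfm : f ^ m = 1 := by
      funext q P
      show (f q P) ^ m = 1
      refine orderOf_dvd_iff_pow_eq_one.mp ?_
      exact dvd_trans
        (Finset.dvd_prod_of_mem (fun P => orderOf (f q P)) (Finset.mem_univ P))
        (Finset.dvd_prod_of_mem
          (fun r : (Nat.card G).primeFactors => ∏ P : Sylow (r : ℕ) G, orderOf (f r P))
          (Finset.mem_univ q))
    have hzm : (z : G) ^ m = 1 := by
      rw [← hfz, ← map_pow, hfm, map_one]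
    have : p ∣ m := hzG ▸ orderOf_dvd_of_pow_eq_one hzm
    exact (hp.coprime_iff_not_dvd.mp hcop) this
  refine ⟨P₀, Q, P₀.isPGroup', hQn, hQcard, ?_⟩
  intro g
  set f := e.symm g with hfdef
  set f₁ : ∀ q : (Nat.card G).primeFactors, ∀ P : Sylow (q : ℕ) G, ↥(P : Subgroup G) :=
    fun q P => if q = pp then f q P else 1 with hf1
  set f₂ : ∀ q : (Nat.card G).primeFactors, ∀ P : Sylow (q : ℕ) G, ↥(P : Subgroup G) :=
    fun q P => if q = pp then 1 else f q P with hf2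
  have hmul : f₁ * f₂ = f := by
    funext q P
    show f₁ q P * f₂ q P = f q P
    by_cases h : q = pp <;> simp [hf1, hf2, h]
  refine ⟨e f₁, e f₂, ?_, ?_, ?_⟩
  · -- e f₁ ∈ P₀
    obtain ⟨nn, hnn⟩ := P₀.isPGroup' (f pp P₀)
    have hx1 : (e f₁) ^ (p ^ nn) = 1 := by
      rw [← map_pow, ← map_one e]
      congr 1
      funext q P
      show (f₁ q P) ^ (p ^ nn) = 1
      by_cases h : q = pp
      · subst h
        rw [show P = P₀ from Subsingleton.elim _ _]
        show (if pp = pp then f pp P₀ else 1) ^ p ^ nn = 1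
        rw [if_pos rfl]
        exact hnn
      · simp [hf1, h]
    have hzp : IsPGroup p (Subgroup.zpowers (e f₁)) := by
      intro z
      obtain ⟨j, hj⟩ := Subgroup.mem_zpowers_iff.mp z.2
      refine ⟨nn, Subtype.ext ?_⟩
      rw [SubgroupClass.coe_pow, OneMemClass.coe_one, ← hj,
        ← zpow_natCast ((e f₁) ^ j), ← zpow_mul, mul_comm, zpow_mul, zpow_natCast, hx1, one_zpow]
    obtain ⟨S, hS⟩ := hzp.exists_le_sylow
    have hSP : S = P₀ := Subsingleton.elim _ _
    exact hSP ▸ hS (Subgroup.mem_zpowers _)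
  · exact Subgroup.mem_map.mpr ⟨f₂, by
      show ev f₂ = 1
      funext P
      show (if pp = pp then 1 else f pp P) = _
      simp, rfl⟩
  · rw [← map_mul, hmul, hfdef, MulEquiv.apply_symm_apply]

lemma aux_bezout (m r : ℕ) (h : Nat.Coprime m r) : ∃ a b : ℤ, a * m + b * r = 1 := by
  have h1 : ((m : ℤ).gcd (r : ℤ) : ℤ) = 1 := by
    rw [Int.gcd_natCast_natCast, h]; norm_num
  refine ⟨Int.gcdA (m : ℤ) (r : ℤ), Int.gcdB (m : ℤ) (r : ℤ), ?_⟩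
  have h2 := Int.gcd_eq_gcd_ab (m : ℤ) (r : ℤ)
  rw [h1] at h2
  linarith

lemma aux_core {G A : Type*} [Group G] [Finite G] (hnil : Group.IsNilpotent G)
    [AddCommGroup A] [Finite A] [DistribMulAction G A]
    (hAG : ∀ a : A, (∀ g : G, g • a = a) → a = 0)
    (V : AddSubgroup A) (p k : ℕ) (hp : p.Prime)
    (u : A) (hu : ((p : ℤ) ^ k) • u = 0) (hd : ∀ g : G, g • u - u ∈ V) : u ∈ V := by
  by_cases hpG : p ∣ Nat.card G
  · obtain ⟨P₀, Q, hP₀, hQn, hQc, hdec⟩ := aux_struct hnil p hp hpG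
    exact aux_avg V p k hp Q hQc (aux_M hAG p k hp P₀ hP₀ Q hQn hdec) u hu hd
  · refine aux_avg V p k hp ⊤ ?_ ?_ u hu hd
    · rwa [Subgroup.card_top]
    · intro a _ h
      exact hAG a fun g => h g (Subgroup.mem_top g)

theorem section_fixed_points_trivial {G A : Type*} [Group G] [Finite G]
    (hnil : Group.IsNilpotent G)
    [AddCommGroup A] [Finite A] [DistribMulAction G A]
    (hAG : ∀ a : A, (∀ g : G, g • a = a) → a = 0)
    (U V : AddSubgroup A) (hVU : V ≤ U)
    (hUinv : ∀ g : G, ∀ a ∈ U, g • a ∈ U)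
    (hVinv : ∀ g : G, ∀ a ∈ V, g • a ∈ V) :
    ∀ u ∈ U, (∀ g : G, g • u - u ∈ V) → u ∈ V := by
  have main : ∀ n : ℕ, 0 < n → ∀ u : A, (n : ℤ) • u = 0 → (∀ g : G, g • u - u ∈ V) → u ∈ V := by
    intro n
    induction n using Nat.strong_induction_on with
    | _ n ih =>
      intro hn u hu hd
      by_cases h1 : n = 1
      · subst h1
        have : u = 0 := by simpa using hu
        rw [this]; exact V.zero_mem
      · have hn0 : n ≠ 0 := hn.ne'
        set p := n.minFac with hpdef
        have hp : p.Prime := Nat.minFac_prime h1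
        set k := n.factorization p with hkdef
        set r := n / p ^ k with hrdef
        have hnr : p ^ k * r = n := Nat.ordProj_mul_ordCompl_eq_self n p
        have hpr : ¬ p ∣ r := Nat.not_dvd_ordCompl hp hn0
        have hk : 0 < k := hp.factorization_pos_of_dvd hn0 (Nat.minFac_dvd n)
        have hcop : Nat.Coprime (p ^ k) r := (hp.coprime_iff_not_dvd.mpr hpr).pow_left k
        obtain ⟨a, b, hab⟩ := aux_bezout (p ^ k) r hcop
        set u₁ : A := (b * (r : ℤ)) • u with hu1
        set u₂ : A := (a * ((p : ℤ) ^ k)) • u with hu2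
        have hsplit : u = u₁ + u₂ := by
          rw [hu1, hu2, ← add_smul]
          have : b * (r : ℤ) + a * ((p : ℤ) ^ k) = 1 := by push_cast at hab ⊢; linarith
          rw [this, one_smul]
        have hnu : ∀ c : ℤ, ((n : ℤ) * c) • u = 0 := fun c => by
          rw [mul_comm, mul_smul, hu, smul_zero]
        have ht1 : ((p : ℤ) ^ k) • u₁ = 0 := by
          rw [hu1, smul_smul, show ((p:ℤ)^k) * (b * (r:ℤ)) = (n : ℤ) * b by
            push_cast [← hnr]; ring]
          exact hnu b
        have ht2 : (r : ℤ) • u₂ = 0 := by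
          rw [hu2, smul_smul, show (r : ℤ) * (a * ((p:ℤ)^k)) = (n : ℤ) * a by
            push_cast [← hnr]; ring]
          exact hnu a
        have hdz : ∀ (c : ℤ) (g : G), g • (c • u) - c • u = c • (g • u - u) := by
          intro c g
          have h : g • (c • u) = c • (g • u) :=
            (DistribMulAction.toAddMonoidHom A g).map_zsmul c u
          rw [h, smul_sub]
        have hd1 : ∀ g : G, g • u₁ - u₁ ∈ V := fun g => by
          rw [hu1, hdz]; exact AddSubgroup.zsmul_mem _ (hd g) _
        have hd2 : ∀ g : G, g • u₂ - u₂ ∈ V := fun g => by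
          rw [hu2, hdz]; exact AddSubgroup.zsmul_mem _ (hd g) _
        have hm1 : u₁ ∈ V := aux_core hnil hAG V p k hp u₁ ht1 hd1
        have hm2 : u₂ ∈ V := by
          have hrpos : 0 < r := Nat.pos_of_ne_zero (by
            intro h; rw [h, mul_zero] at hnr; exact hn0 hnr.symm)
          have hrlt : r < n := by
            have h2 : 2 ≤ p ^ k := by
              calc 2 ≤ p := hp.two_le
              _ ≤ p ^ k := Nat.le_self_pow hk.ne' p
            nlinarith [hnr]
          exact ih r hrlt hrpos u₂ ht2 hd2
        rw [hsplit]
        exact V.add_mem hm1 hm2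
  intro u _ hd
  refine main (Nat.card A) Nat.card_pos u ?_ hd
  rw [natCast_zsmul]
  exact card_nsmul_eq_zero'
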